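/- Let 0 < d ≤ q ≤ 1 and ε > 0, and let F = (√(4·d·e^ε·(1 − q) + (d + q·e^ε − 1)²) + d + q·e^ε − 1)/(2·d). Define the sequence a : ℕ → ℝ by a 1 = ε and a (t+1) = log((q·(e^{a t} − 1) + 1)/(d·(e^{a t} − 1) + 1)) + ε. Then a t ≤ log F for every t ≥ 1; that is, log F is an upper bound for the privacy leakage at every time point. -/

import Mathlib

set_option maxHeartbeats 2000000 in
/-- boundedness case: with `0 < d ≤ q ≤ 1` and the fixed point `F` from the
supremum theorem, the recursively defined leakage sequence `a 1 = ε`,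
`a (t+1) = log((q·(e^{a t} − 1) + 1)/(d·(e^{a t} − 1) + 1)) + ε` satisfies `a t ≤ log F`
for every `t ≥ 1`. -/
theorem stmt_12 (q d ε : ℝ) (hd0 : 0 < d) (hdq : d ≤ q) (hq1 : q ≤ 1) (hε : 0 < ε)
    (F : ℝ)
    (hF : F = (Real.sqrt (4 * d * Real.exp ε * (1 - q) + (d + q * Real.exp ε - 1) ^ 2)
                + d + q * Real.exp ε - 1) / (2 * d))
    (a : ℕ → ℝ) (ha1 : a 1 = ε)
    (harec : ∀ t : ℕ, 1 ≤ t →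
      a (t + 1) =
        Real.log ((q * (Real.exp (a t) - 1) + 1) / (d * (Real.exp (a t) - 1) + 1)) + ε) :
    ∀ t : ℕ, 1 ≤ t → a t ≤ Real.log F := by
  set E := Real.exp ε with hEdef
  clear_value E
  have hE1 : 1 < E := by
    rw [hEdef]; linarith [Real.add_one_le_exp ε]
  have hE0 : 0 < E := lt_trans one_pos hE1
  have hd1 : d ≤ 1 := hdq.trans hq1
  have hq0 : 0 < q := lt_of_lt_of_le hd0 hdq
  set D := 4 * d * E * (1 - q) + (d + q * E - 1) ^ 2 with hDdef
  clear_value D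
  have hDnn : 0 ≤ D := by
    nlinarith [mul_pos hd0 hE0, sq_nonneg (d + q * E - 1)]
  have hs : Real.sqrt D = 2 * d * F - (d + q * E - 1) := by
    rw [hF]; field_simp; ring
  have hsnn : 0 ≤ 2 * d * F - (d + q * E - 1) := hs ▸ Real.sqrt_nonneg D
  have hsq : (2 * d * F - (d + q * E - 1)) ^ 2 = D := by
    rw [← hs]; exact Real.sq_sqrt hDnn
  have hfix : d * F ^ 2 + (1 - d - q * E) * F - E * (1 - q) = 0 := by
    nlinarith [hsq, hd0]
  have hF1 : 1 < F := by
    by_contra hcon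
    push_neg at hcon
    have h1 : (F - 1) * (d * F + 1 - q * E) = E - 1 := by linear_combination hfix
    nlinarith [h1, mul_nonneg (sub_nonneg.mpr hcon) hsnn,
      mul_nonneg hd0.le (sq_nonneg (1 - F))]
  have hF0 : 0 < F := lt_trans one_pos hF1
  -- d * F ≤ E * q
  have hdFEq : d * F ≤ E * q := by
    have hle : D ≤ (q * E + 1 - d) ^ 2 := by
      nlinarith [mul_nonneg hE0.le (sub_nonneg.mpr hdq)]
    have h2 : Real.sqrt D ≤ q * E + 1 - d := by
      have h3 := Real.sqrt_le_sqrt hle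
      rwa [Real.sqrt_sq (by nlinarith [mul_pos hq0 hE0])] at h3
    rw [hs] at h2; linarith
  -- E ≤ F
  have hEF : E ≤ F := by
    have hden' : 0 < d * (F - 1) + 1 := by
      have := mul_pos hd0 (sub_pos.mpr hF1); linarith
    have h2 : (F - E) * (d * (F - 1) + 1) = E * (q - d) * (F - 1) := by
      linear_combination hfix
    have h3 : 0 ≤ E * (q - d) * (F - 1) :=
      mul_nonneg (mul_nonneg hE0.le (sub_nonneg.mpr hdq)) (by linarith)
    have h4 : 0 ≤ (F - E) * (d * (F - 1) + 1) := by rw [h2]; exact h3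
    nlinarith [h4, hden']
  -- key step inequality
  have key : ∀ x : ℝ, 0 < x → x ≤ F → E * (q * (x - 1) + 1) ≤ F * (d * (x - 1) + 1) := by
    intro x hx0 hxF
    have h2 : F * (d * (x - 1) + 1) - E * (q * (x - 1) + 1) = (F - x) * (E * q - d * F) := by
      linear_combination hfix
    have h5 : 0 ≤ (F - x) * (E * q - d * F) :=
      mul_nonneg (sub_nonneg.mpr hxF) (sub_nonneg.mpr hdFEq)
    linarith [h2, h5]
  intro t ht
  induction t, ht using Nat.le_induction with
  | base =>
    rw [ha1]
    calc ε = Real.log E := by rw [hEdef, Real.log_exp]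
    _ ≤ Real.log F := Real.log_le_log hE0 hEF
  | succ n hn ih =>
    rw [harec n hn]
    set x := Real.exp (a n) with hxdef
    have hx0 : 0 < x := Real.exp_pos _
    have hxF : x ≤ F := by
      calc x ≤ Real.exp (Real.log F) := Real.exp_le_exp.mpr ih
      _ = F := Real.exp_log hF0
    have hden : 0 < d * (x - 1) + 1 := by nlinarith
    have hnum : 0 < q * (x - 1) + 1 := by nlinarith
    have hratio : 0 < (q * (x - 1) + 1) / (d * (x - 1) + 1) := div_pos hnum hden
    have hlog : Real.log ((q * (x - 1) + 1) / (d * (x - 1) + 1)) + ε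
        = Real.log ((q * (x - 1) + 1) / (d * (x - 1) + 1) * E) := by
      rw [Real.log_mul (ne_of_gt hratio) (ne_of_gt hE0), hEdef, Real.log_exp]
    rw [hlog]
    apply Real.log_le_log (by positivity)
    rw [div_mul_eq_mul_div, div_le_iff₀ hden]
    nlinarith [key x hx0 hxF]
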